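/- arXiv:1011.1247 — 6 statements merged into one kernel-verified Lean document; each statement's English description precedes it below -/
import Mathlib

section
/- Let E and F be real normed vector spaces. Let N_sym be a norm on E × F that extends the norms of E and F and satisfies the symmetry condition N_sym(e, −f) = N_sym(e, f) for all e ∈ E, f ∈ F. Let N_any be any norm on E × F that also extends the norms of E and F. Then N_any(e, f) ≤ 2 · N_sym(e, f) for all e ∈ E, f ∈ F. -/
/-- If `N_sym` is a seminorm on `E × F` extending the norms of `E` and `F` and satisfying the
symmetry condition `N_sym (e, -f) = N_sym (e, f)`, and `N_any` is any seminorm on `E × F`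
extending the norms of `E` and `F`, then `N_any ≤ 2 • N_sym`. -/
theorem le_two_mul_of_symmetric_norm
    {E F : Type*} [NormedAddCommGroup E] [NormedSpace ℝ E]
    [NormedAddCommGroup F] [NormedSpace ℝ F]
    (Nsym Nany : Seminorm ℝ (E × F))
    (hsymE : ∀ e : E, Nsym (e, 0) = ‖e‖) (hsymF : ∀ f : F, Nsym (0, f) = ‖f‖)
    (hsym : ∀ (e : E) (f : F), Nsym (e, -f) = Nsym (e, f))
    (hanyE : ∀ e : E, Nany (e, 0) = ‖e‖) (hanyF : ∀ f : F, Nany (0, f) = ‖f‖) :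
    ∀ (e : E) (f : F), Nany (e, f) ≤ 2 * Nsym (e, f) := by
  intro e f
  have h1 : Nsym (e, 0) ≤ Nsym (e, f) := by
    have : (e, (0 : F)) = (2 : ℝ)⁻¹ • ((e, f) + (e, -f)) := by
      simp [Prod.ext_iff, smul_smul]; module
    calc Nsym (e, 0) = (2 : ℝ)⁻¹ * Nsym ((e, f) + (e, -f)) := by
          rw [this, map_smul_eq_mul]; norm_num
      _ ≤ (2 : ℝ)⁻¹ * (Nsym (e, f) + Nsym (e, -f)) := by
          gcongr; exact map_add_le_add _ _ _
      _ = Nsym (e, f) := by rw [hsym]; ring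
  have h2 : Nsym (0, f) ≤ Nsym (e, f) := by
    have : ((0 : E), f) = (2 : ℝ)⁻¹ • ((e, f) - (e, -f)) := by
      simp [Prod.ext_iff, smul_smul]; module
    calc Nsym (0, f) = (2 : ℝ)⁻¹ * Nsym ((e, f) - (e, -f)) := by
          rw [this, map_smul_eq_mul]; norm_num
      _ ≤ (2 : ℝ)⁻¹ * (Nsym (e, f) + Nsym (e, -f)) := by
          gcongr; exact map_sub_le_add _ _ _
      _ = Nsym (e, f) := by rw [hsym]; ring
  calc Nany (e, f) = Nany ((e, 0) + (0, f)) := by simp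
    _ ≤ Nany (e, 0) + Nany (0, f) := map_add_le_add _ _ _
    _ = Nsym (e, 0) + Nsym (0, f) := by rw [hanyE, hanyF, hsymE, hsymF]
    _ ≤ 2 * Nsym (e, f) := by linarith
end

section
/- Let C be a unital C*-algebra, let φ be a state on C, and let A and B be closed unital star-subalgebras of C that commute elementwise, i.e. a·b = b·a for all a ∈ A and b ∈ B. If the restriction of φ to A is a pure state of A, then φ(a·b) = φ(a)·φ(b) for all a ∈ A and b ∈ B. -/
open scoped ComplexOrder

/-- A state on a unital (topological) star algebra `B` is a continuous linear functional `φ` with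
`φ 1 = 1` and `φ (x* x) ≥ 0` for all `x`. -/
def IsState {B : Type*} [Ring B] [StarRing B] [Module ℂ B] [TopologicalSpace B]
    (φ : B →L[ℂ] ℂ) : Prop :=
  φ 1 = 1 ∧ ∀ x : B, 0 ≤ φ (star x * x)

namespace StateFactorAux

variable {C : Type*} [CStarAlgebra C]

/-- The inclusion of a star subalgebra as a continuous linear map. -/
noncomputable def incl (A : StarSubalgebra ℂ C) : ↥A →L[ℂ] C :=
  { toLinearMap :=
      { toFun := Subtype.val, map_add' := fun _ _ => rfl, map_smul' := fun _ _ => rfl },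
    cont := continuous_subtype_val }

@[simp] lemma incl_apply (A : StarSubalgebra ℂ C) (a : ↥A) : incl A a = ↑a := rfl

variable [PartialOrder C] [StarOrderedRing C]

lemma state_nonneg (φ : C →L[ℂ] ℂ) (hφ : IsState φ) {v : C} (hv : 0 ≤ v) :
    0 ≤ φ v := by
  have h1 : CFC.sqrt v * CFC.sqrt v = v := CFC.sqrt_mul_sqrt_self v hv
  have h2 : IsSelfAdjoint (CFC.sqrt v) := IsSelfAdjoint.of_nonneg (CFC.sqrt_nonneg v)
  have h3 := hφ.2 (CFC.sqrt v)
  rwa [h2.star_eq, h1] at h3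

lemma state_conj_nonneg (φ : C →L[ℂ] ℂ) (hφ : IsState φ) (a : C) {v : C} (hv : 0 ≤ v) :
    0 ≤ φ (star a * v * a) := by
  obtain ⟨s, hssa, hs⟩ : ∃ s : C, IsSelfAdjoint s ∧ s * s = v :=
    ⟨CFC.sqrt v, IsSelfAdjoint.of_nonneg (CFC.sqrt_nonneg v), CFC.sqrt_mul_sqrt_self v hv⟩
  have key : star a * v * a = star (s * a) * (s * a) := by
    rw [star_mul, hssa.star_eq, ← hs]
    simp only [mul_assoc]
  rw [key]
  exact hφ.2 _

/-- The key lemma: factorization for positive `b` with `0 < (φ b).re < 1`. -/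
lemma key_lemma (A : StarSubalgebra ℂ C) (φ : C →L[ℂ] ℂ) (hφ : IsState φ)
    (hpure : ∀ ψ₁ ψ₂ : ↥A →L[ℂ] ℂ, IsState ψ₁ → IsState ψ₂ → ∀ t : ℝ, 0 < t → t < 1 →
      (∀ a : ↥A, φ ↑a = t * ψ₁ a + (1 - t) * ψ₂ a) → ψ₁ = ψ₂)
    {b : C} (hb0 : 0 ≤ b) (hb1 : 0 ≤ 1 - b)
    (ht0 : 0 < (φ b).re) (ht1 : (φ b).re < 1)
    (hbcomm : ∀ a ∈ A, a * b = b * a) :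
    ∀ a ∈ A, φ (a * b) = φ a * φ b := by
  set t : ℝ := (φ b).re with ht_def
  have hφb : 0 ≤ φ b := state_nonneg φ hφ hb0
  have him : (φ b).im = 0 := by
    have := (Complex.le_def.mp hφb).2
    simpa using this.symm
  have hbt : φ b = (t : ℂ) := by
    apply Complex.ext <;> simp [him, ht_def]
  have htne : (t : ℂ) ≠ 0 := by
    exact_mod_cast ne_of_gt (by exact_mod_cast ht0 : (0:ℝ) < t)
  have h1tne : (1 : ℂ) - (t : ℂ) ≠ 0 := by
    have : (t : ℂ) ≠ 1 := by exact_mod_cast ne_of_lt ht1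
    intro h
    exact this (by linear_combination -h)
  have hinv : (0 : ℂ) ≤ ((t : ℂ))⁻¹ := by
    rw [← Complex.ofReal_inv]
    exact_mod_cast (by positivity : (0:ℝ) ≤ t⁻¹)
  have h1inv : (0 : ℂ) ≤ ((1 : ℂ) - (t : ℂ))⁻¹ := by
    have : ((1 : ℂ) - (t : ℂ)) = ((1 - t : ℝ) : ℂ) := by push_cast; ring
    rw [this, ← Complex.ofReal_inv]
    have : (0:ℝ) ≤ (1 - t)⁻¹ := by
      have : (0:ℝ) < 1 - t := by linarith
      positivity
    exact_mod_cast this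
  -- the two functionals
  set ρ : C → (↥A →L[ℂ] ℂ) :=
    fun c => φ.comp (((ContinuousLinearMap.mul ℂ C).flip c).comp (incl A)) with hρ
  have ρ_apply : ∀ c (a : ↥A), ρ c a = φ (↑a * c) := fun _ _ => rfl
  set ψ₁ : ↥A →L[ℂ] ℂ := ((t : ℂ))⁻¹ • ρ b with hψ₁
  set ψ₂ : ↥A →L[ℂ] ℂ := ((1 : ℂ) - (t : ℂ))⁻¹ • ρ (1 - b) with hψ₂
  have ψ₁app : ∀ a : ↥A, ψ₁ a = ((t : ℂ))⁻¹ * φ (↑a * b) := fun a => rfl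
  have ψ₂app : ∀ a : ↥A, ψ₂ a = ((1 : ℂ) - (t : ℂ))⁻¹ * φ (↑a * (1 - b)) := fun a => rfl
  -- positivity helper
  have hpos : ∀ (v : C), 0 ≤ v → (∀ a ∈ A, a * v = v * a) →
      ∀ x : ↥A, 0 ≤ φ ((↑(star x * x) : C) * v) := by
    intro v hv hcv x
    have hkey : (↑(star x * x) : C) * v = star (↑x : C) * v * (↑x : C) := by
      show (star (↑x : C) * ↑x) * v = star (↑x : C) * v * ↑x
      rw [mul_assoc, hcv (↑x) x.2, ← mul_assoc]
    rw [hkey]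
    exact state_conj_nonneg φ hφ _ hv
  have h1bcomm : ∀ a ∈ A, a * (1 - b) = (1 - b) * a := by
    intro a ha
    rw [mul_sub, sub_mul, mul_one, one_mul, hbcomm a ha]
  -- ψ₁ and ψ₂ are states
  have hs1 : IsState ψ₁ := by
    constructor
    · rw [ψ₁app]
      show ((t : ℂ))⁻¹ * φ ((1 : C) * b) = 1
      rw [one_mul, hbt, inv_mul_cancel₀ htne]
    · intro x
      rw [ψ₁app]
      exact mul_nonneg hinv (hpos b hb0 hbcomm x)
  have hs2 : IsState ψ₂ := by
    constructor
    · rw [ψ₂app]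
      show ((1 : ℂ) - (t : ℂ))⁻¹ * φ ((1 : C) * (1 - b)) = 1
      rw [one_mul, map_sub, hφ.1, hbt, inv_mul_cancel₀ h1tne]
    · intro x
      rw [ψ₂app]
      exact mul_nonneg h1inv (hpos (1 - b) hb1 h1bcomm x)
  -- decomposition
  have hdec : ∀ a : ↥A, φ ↑a = (t : ℂ) * ψ₁ a + (1 - (t : ℂ)) * ψ₂ a := by
    intro a
    rw [ψ₁app, ψ₂app, ← mul_assoc, ← mul_assoc, mul_inv_cancel₀ htne,
      mul_inv_cancel₀ h1tne, one_mul, one_mul, ← map_add]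
    congr 1
    rw [← mul_add]
    simp
  have heq : ψ₁ = ψ₂ := hpure ψ₁ ψ₂ hs1 hs2 t ht0 ht1 hdec
  intro a ha
  have hd := hdec ⟨a, ha⟩
  rw [← heq] at hd
  have hψ : φ a = ψ₁ ⟨a, ha⟩ := by rw [hd]; ring
  rw [ψ₁app] at hψ
  have : φ ((⟨a, ha⟩ : ↥A) : C) = ((t:ℂ))⁻¹ * φ (a * b) := hψ
  rw [hbt]
  field_simp at this
  linear_combination -this

end StateFactorAux

/-- If `φ` is a state on a unital C*-algebra `C`, `A` and `B` are closed unital star-subalgebras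
of `C` which commute elementwise, and the restriction of `φ` to `A` is a pure state of `A`, then
`φ (a * b) = φ a * φ b` for all `a ∈ A`, `b ∈ B`. -/
theorem state_factors_of_pure_restriction
    {C : Type*} [CStarAlgebra C] (A B : StarSubalgebra ℂ C)
    (hA : IsClosed (A : Set C)) (hB : IsClosed (B : Set C))
    (hcomm : ∀ a ∈ A, ∀ b ∈ B, a * b = b * a)
    (φ : C →L[ℂ] ℂ) (hφ : IsState φ)
    (hpure : ∀ ψ₁ ψ₂ : ↥A →L[ℂ] ℂ, IsState ψ₁ → IsState ψ₂ → ∀ t : ℝ, 0 < t → t < 1 →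
      (∀ a : ↥A, φ ↑a = t * ψ₁ a + (1 - t) * ψ₂ a) → ψ₁ = ψ₂) :
    ∀ a ∈ A, ∀ b ∈ B, φ (a * b) = φ a * φ b := by
  letI : PartialOrder C := CStarAlgebra.spectralOrder C
  letI : StarOrderedRing C := CStarAlgebra.spectralOrderedRing C
  -- Step 1: the selfadjoint case
  have hsa : ∀ b ∈ B, IsSelfAdjoint b → ∀ a ∈ A, φ (a * b) = φ a * φ b := by
    intro b hbB hbsa a haA
    set s : ℝ := (6 * (‖b‖ + 1))⁻¹ with hs_def
    have hs : 0 < s := by positivity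
    have hsb : s * ‖b‖ < 6⁻¹ := by
      rw [hs_def]
      rw [inv_mul_lt_iff₀ (by positivity)]
      have : (0:ℝ) ≤ ‖b‖ := norm_nonneg b
      nlinarith
    have hsb' : 0 ≤ s * ‖b‖ := by positivity
    set b' : C := (2⁻¹ : ℝ) • 1 + s • b with hb'_def
    have hb_le : b ≤ ‖b‖ • (1 : C) := by
      simpa [Algebra.algebraMap_eq_smul_one] using hbsa.le_algebraMap_norm_self
    have hb_ge : -(‖b‖ • (1 : C)) ≤ b := by
      simpa [Algebra.algebraMap_eq_smul_one] using hbsa.neg_algebraMap_norm_le_self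
    have hplus : (0:C) ≤ b + ‖b‖ • 1 := by
      rw [← neg_le_iff_add_nonneg]
      exact hb_ge
    have hminus : (0:C) ≤ ‖b‖ • 1 - b := sub_nonneg.mpr hb_le
    have hb'0 : 0 ≤ b' := by
      have key : b' = s • (b + ‖b‖ • 1) + (2⁻¹ - s * ‖b‖) • (1:C) := by
        rw [hb'_def]; module
      rw [key]
      exact add_nonneg (smul_nonneg hs.le hplus)
        (smul_nonneg (by linarith [hsb]) zero_le_one)
    have hb'1 : 0 ≤ 1 - b' := by
      have key : 1 - b' = s • (‖b‖ • 1 - b) + (2⁻¹ - s * ‖b‖) • (1:C) := by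
        rw [hb'_def]; module
      rw [key]
      exact add_nonneg (smul_nonneg hs.le hminus)
        (smul_nonneg (by linarith [hsb]) zero_le_one)
    have hφb' : φ b' = (2⁻¹ : ℂ) + (s : ℂ) * φ b := by
      simp only [hb'_def, map_add, ← Complex.coe_smul, map_smul, hφ.1, smul_eq_mul, mul_one]
      norm_num
    -- bounds on (φ b).re
    have hre_ge : -‖b‖ ≤ (φ b).re := by
      have h := StateFactorAux.state_nonneg φ hφ hplus
      simp only [map_add, ← Complex.coe_smul, map_smul, hφ.1, smul_eq_mul, mul_one] at h
      have := (Complex.le_def.mp h).1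
      simp at this
      linarith
    have hre_le : (φ b).re ≤ ‖b‖ := by
      have h := StateFactorAux.state_nonneg φ hφ hminus
      simp only [map_sub, ← Complex.coe_smul, map_smul, hφ.1, smul_eq_mul, mul_one] at h
      have := (Complex.le_def.mp h).1
      simp at this
      linarith
    have hb're : (φ b').re = 2⁻¹ + s * (φ b).re := by
      rw [hφb']
      simp
    have ht0 : 0 < (φ b').re := by
      rw [hb're]
      nlinarith [mul_le_mul_of_nonneg_left hre_ge hs.le]
    have ht1 : (φ b').re < 1 := by
      rw [hb're]
      nlinarith [mul_le_mul_of_nonneg_left hre_le hs.le]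
    have hb'comm : ∀ x ∈ A, x * b' = b' * x := by
      intro x hx
      rw [hb'_def]
      rw [mul_add, add_mul, mul_smul_comm, smul_mul_assoc, mul_smul_comm, smul_mul_assoc,
        mul_one, one_mul, hcomm x hx b hbB]
    have hkey := StateFactorAux.key_lemma A φ hφ hpure hb'0 hb'1 ht0 ht1 hb'comm a haA
    rw [hφb'] at hkey
    have hab' : φ (a * b') = (2⁻¹ : ℂ) * φ a + (s : ℂ) * φ (a * b) := by
      simp only [hb'_def, mul_add, map_add, mul_smul_comm, mul_one,
        ← Complex.coe_smul, map_smul, smul_eq_mul]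
      norm_num
    rw [hab'] at hkey
    have hsne : (s : ℂ) ≠ 0 := by exact_mod_cast hs.ne'
    have : (s : ℂ) * φ (a * b) = (s : ℂ) * (φ a * φ b) := by linear_combination hkey
    exact mul_left_cancel₀ hsne this
  -- Step 2: general case via selfadjoint decomposition
  intro a ha b hb
  obtain ⟨h1, hh1⟩ : ∃ h1 : C, h1 = (2⁻¹ : ℂ) • (b + star b) := ⟨_, rfl⟩
  obtain ⟨h2, hh2⟩ : ∃ h2 : C, h2 = (-(Complex.I / 2)) • (b - star b) := ⟨_, rfl⟩
  have hh1B : h1 ∈ B := by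
    rw [hh1]; exact SMulMemClass.smul_mem _ (add_mem hb (star_mem hb))
  have hh2B : h2 ∈ B := by
    rw [hh2]; exact SMulMemClass.smul_mem _ (sub_mem hb (star_mem hb))
  have hh1sa : IsSelfAdjoint h1 := by
    rw [hh1]
    show star _ = _
    simp [star_smul, star_add, Complex.star_def, add_comm]
  have hh2sa : IsSelfAdjoint h2 := by
    rw [hh2]
    show star _ = _
    rw [star_smul, star_sub, star_star]
    simp [Complex.star_def, smul_sub, neg_smul, neg_sub]
    module
  have hIcoef : Complex.I * -(Complex.I / 2) = 2⁻¹ := by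
    linear_combination (-(1:ℂ)/2) * Complex.I_mul_I
  have hdecomp : b = h1 + Complex.I • h2 := by
    rw [hh1, hh2, smul_smul, hIcoef]
    module
  have e1 := hsa h1 hh1B hh1sa a ha
  have e2 := hsa h2 hh2B hh2sa a ha
  have hab : a * b = a * h1 + Complex.I • (a * h2) := by
    rw [hdecomp, mul_add, mul_smul_comm]
  have hφb : φ b = φ h1 + Complex.I * φ h2 := by
    rw [hdecomp, map_add, map_smul, smul_eq_mul]
  rw [hab, map_add, map_smul, smul_eq_mul, e1, e2, hφb]
  ring
end

section
/- Let A be a unital C*-algebra that is NOT commutative (there exist a, b ∈ A with a·b ≠ b·a). Then there exists an entangled state φ on M₂(A) whose M₂-marginal is the normalized trace, i.e. φ(m.map (algebraMap ℂ A)) = (m₀₀ + m₁₁)/2 for every 2×2 complex matrix m. -/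
open scoped ComplexOrder

noncomputable section

/-- The state space of a unital (topological) star algebra `B`: the set of continuous linear
functionals `φ : B → ℂ` (with the weak-* topology on the dual) such that `φ 1 = 1` and
`φ (x* x) ≥ 0` for all `x`. -/
def stateSpace (B : Type*) [Ring B] [StarRing B] [Module ℂ B] [TopologicalSpace B] :
    Set (WeakDual ℂ B) :=
  {φ | φ 1 = 1 ∧ ∀ x : B, 0 ≤ φ (star x * x)}

/-- Entrywise application of a continuous linear map to a matrix, as a continuous linear map. -/
def matrixMapCLM {k : ℕ} {B C' : Type*} [Ring B] [Module ℂ B] [TopologicalSpace B]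
    [Ring C'] [Module ℂ C'] [TopologicalSpace C'] (g : B →L[ℂ] C') :
    Matrix (Fin k) (Fin k) B →L[ℂ] Matrix (Fin k) (Fin k) C' where
  toLinearMap := LinearMap.mapMatrix g.toLinearMap
  cont := by
    show Continuous fun M : Matrix (Fin k) (Fin k) B => M.map g
    exact continuous_pi fun i => continuous_pi fun j =>
      g.cont.comp ((continuous_apply j).comp (continuous_apply i))

/-- The product state `μ ⊗ ψ` on `M_k(B)`, sending `x` to `μ (x.map ψ)`. -/
def productState {k : ℕ} {B : Type*} [Ring B] [Module ℂ B] [TopologicalSpace B]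
    (μ : WeakDual ℂ (Matrix (Fin k) (Fin k) ℂ)) (ψ : WeakDual ℂ B) :
    WeakDual ℂ (Matrix (Fin k) (Fin k) B) :=
  (μ : Matrix (Fin k) (Fin k) ℂ →L[ℂ] ℂ).comp (matrixMapCLM (ψ : B →L[ℂ] ℂ))

/-- A state on `M_k(B)` is separable if it lies in the weak-* closure of the convex hull of the
product states `μ ⊗ ψ` (with `μ` a state on `M_k(ℂ)` and `ψ` a state on `B`), and entangled
otherwise. -/
def IsSeparableState {k : ℕ} {B : Type*} [Ring B] [StarRing B] [Module ℂ B] [TopologicalSpace B]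
    (φ : WeakDual ℂ (Matrix (Fin k) (Fin k) B)) : Prop :=
  φ ∈ closure (convexHull ℝ
    {χ : WeakDual ℂ (Matrix (Fin k) (Fin k) B) |
      ∃ μ ∈ stateSpace (Matrix (Fin k) (Fin k) ℂ), ∃ ψ ∈ stateSpace B, χ = productState μ ψ})


open Complex StarAlgebra

section AuxLemmas

lemma ofReal_mul_nonneg' {r : ℝ} (hr : 0 ≤ r) {z : ℂ} (hz : 0 ≤ z) : 0 ≤ (r : ℂ) * z := by
  rw [Complex.le_def] at hz ⊢
  obtain ⟨h1, h2⟩ := hz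
  simp only [Complex.zero_re, Complex.zero_im] at h1 h2 ⊢
  constructor
  · simp only [Complex.mul_re, Complex.ofReal_re, Complex.ofReal_im, zero_mul, sub_zero]
    exact mul_nonneg hr h1
  · simp [Complex.mul_im, ← h2]

section General

variable {B : Type*} [Ring B] [StarRing B] [Algebra ℂ B] [StarModule ℂ B]

/-- A positive linear functional is star-preserving. -/
lemma pos_star_apply (ψ : B →ₗ[ℂ] ℂ) (hpos : ∀ x, 0 ≤ ψ (star x * x)) (a : B) :
    ψ (star a) = starRingEnd ℂ (ψ a) := by
  have him : ∀ x : B, (ψ (star x * x)).im = 0 := fun x => ((Complex.le_def.mp (hpos x)).2).symm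
  have e1 : star ((1 : B) + a) * ((1 : B) + a) = 1 + a + star a + star a * a := by
    simp [star_add, add_mul, mul_add]; abel
  have e2 : star ((Complex.I • (1 : B)) + a) * ((Complex.I • (1 : B)) + a)
      = (1 : B) + (Complex.I • star a - Complex.I • a) + star a * a := by
    simp [star_add, star_smul, add_mul, mul_add, smul_smul, Complex.conj_I, mul_smul_comm,
      smul_mul_assoc, Complex.I_mul_I, neg_smul]
    abel
  have him1 : (ψ 1).im = 0 := by simpa using him 1
  have himaa : (ψ (star a * a)).im = 0 := him a
  have k1 : (ψ (star a)).im = -(ψ a).im := by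
    have := him (1 + a)
    rw [e1] at this
    simp only [map_add, Complex.add_im, him1, himaa] at this
    linarith
  have k2 : (ψ (star a)).re = (ψ a).re := by
    have := him (Complex.I • (1 : B) + a)
    rw [e2] at this
    simp only [map_add, map_sub, map_smul, Complex.add_im, Complex.sub_im, smul_eq_mul,
      Complex.mul_im, Complex.I_re, Complex.I_im, him1, himaa] at this
    linarith
  exact Complex.ext (by simp [k2]) (by simp [k1])

/-- Cauchy–Schwarz for the unit: `|ψ a|² ≤ Re ψ(a* a)` for a state `ψ`. -/
lemma pos_cs_one (ψ : B →ₗ[ℂ] ℂ) (h1 : ψ 1 = 1) (hpos : ∀ x, 0 ≤ ψ (star x * x)) (a : B) :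
    Complex.normSq (ψ a) ≤ (ψ (star a * a)).re := by
  set z := ψ a with hz
  have e : star ((-z) • (1 : B) + a) * ((-z) • (1 : B) + a)
      = (Complex.normSq z : ℂ) • (1 : B) + ((-(starRingEnd ℂ z)) • a + (-z) • star a)
        + star a * a := by
    simp [star_add, star_smul, add_mul, mul_add, smul_smul, mul_smul_comm, smul_mul_assoc]
    rw [Complex.mul_conj]
    abel_nf
    try simp [Complex.coe_smul]
    try abel
  have hp := hpos ((-z) • (1 : B) + a)
  rw [e] at hp
  have hre := (Complex.le_def.mp hp).1
  have hstar : ψ (star a) = starRingEnd ℂ z := pos_star_apply ψ hpos a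
  simp only [map_add, map_smul, h1, hstar, smul_eq_mul, mul_one, Complex.add_re, Complex.zero_re]
    at hre
  rw [← hz] at hre
  have h2 : ((-(starRingEnd ℂ z)) * z).re = -Complex.normSq z := by
    simp [Complex.normSq_apply, Complex.mul_re]
  have h3 : ((-z) * (starRingEnd ℂ z)).re = -Complex.normSq z := by
    simp [Complex.normSq_apply, Complex.mul_re]
  rw [Complex.ofReal_re] at hre
  linarith

end General

section CStar

variable {A : Type*} [CStarAlgebra A]

lemma norm_one_unital_im [Nontrivial A] (g : A →L[ℂ] ℂ) (hg : ‖g‖ ≤ 1) (h1 : g 1 = 1) {a : A}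
    (ha : IsSelfAdjoint a) : (g a).im = 0 := by
  have key : ∀ t : ℝ, 2 * t * (g a).im ≤ ‖a‖ ^ 2 := by
    intro t
    set u : A := a + ((t : ℂ) * Complex.I) • 1 with hu
    have hw : ((t : ℂ) * Complex.I) * ((t : ℂ) * Complex.I) = -((t : ℂ) ^ 2) := by
      rw [mul_mul_mul_comm, Complex.I_mul_I]
      ring
    have hstar : star u * u = a * a + ((t : ℂ) ^ 2) • (1 : A) := by
      have hsu : star u = a - ((t : ℂ) * Complex.I) • 1 := by
        simp [hu, star_add, star_smul, ha.star_eq, Complex.conj_I, mul_comm, sub_eq_add_neg]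
      rw [hsu, hu]
      simp only [sub_mul, mul_add, mul_smul_comm, smul_mul_assoc, one_mul, mul_one, smul_add,
        smul_sub, smul_smul]
      rw [hw, neg_smul]
      abel
    have hnu : ‖u‖ ^ 2 ≤ ‖a‖ ^ 2 + t ^ 2 := by
      have h2 : ‖u‖ ^ 2 = ‖star u * u‖ := by
        rw [CStarRing.norm_star_mul_self, pow_two]
      rw [h2, hstar]
      calc ‖a * a + ((t : ℂ) ^ 2) • (1 : A)‖ ≤ ‖a * a‖ + ‖((t : ℂ) ^ 2) • (1 : A)‖ :=
            norm_add_le _ _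
        _ ≤ ‖a‖ ^ 2 + t ^ 2 := by
            gcongr
            · exact (norm_mul_le a a).trans_eq (pow_two ‖a‖).symm
            · rw [norm_smul, CStarRing.norm_one, mul_one, norm_pow, Complex.norm_real,
                Real.norm_eq_abs, _root_.sq_abs]
    have hgu : g u = g a + (t : ℂ) * Complex.I := by
      simp [hu, h1]
    have hb : ‖g u‖ ≤ ‖u‖ := by
      calc ‖g u‖ ≤ ‖g‖ * ‖u‖ := g.le_opNorm u
        _ ≤ 1 * ‖u‖ := by gcongr
        _ = ‖u‖ := one_mul _
    have hsq : Complex.normSq (g u) ≤ ‖a‖ ^ 2 + t ^ 2 := by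
      have := sq_le_sq' (by linarith [norm_nonneg (g u), norm_nonneg u]) hb
      rw [Complex.sq_norm] at this
      calc Complex.normSq (g u) ≤ ‖u‖ ^ 2 := this
        _ ≤ ‖a‖ ^ 2 + t ^ 2 := hnu
    rw [hgu] at hsq
    simp [Complex.normSq_apply] at hsq
    nlinarith [sq_nonneg ((g a).re), sq_nonneg ((g a).im)]
  by_contra him
  have := key ((‖a‖ ^ 2 + 1) / (2 * (g a).im))
  rw [mul_comm (2 : ℝ) _, mul_assoc] at this
  rw [div_mul_cancel₀ _ (by simpa using him)] at this
  linarith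

lemma norm_one_unital_pos [Nontrivial A] (g : A →L[ℂ] ℂ) (hg : ‖g‖ ≤ 1) (h1 : g 1 = 1) (x : A) :
    0 ≤ g (star x * x) := by
  letI := CStarAlgebra.spectralOrder A
  haveI := CStarAlgebra.spectralOrderedRing A
  set a := star x * x with hadef
  have ha : 0 ≤ a := star_mul_self_nonneg x
  have hsa : IsSelfAdjoint a := IsSelfAdjoint.of_nonneg ha
  have him : (g a).im = 0 := norm_one_unital_im g hg h1 hsa
  set b := algebraMap ℝ A ‖a‖ - a with hb
  have hb0 : 0 ≤ b := sub_nonneg.mpr hsa.le_algebraMap_norm_self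
  have hble : b ≤ algebraMap ℝ A ‖a‖ := by
    rw [hb]
    exact sub_le_self _ ha
  have hbn : ‖b‖ ≤ ‖a‖ := (CStarAlgebra.norm_le_iff_le_algebraMap b (norm_nonneg a) hb0).mpr hble
  have hgb : g b = (‖a‖ : ℂ) - g a := by
    rw [hb, map_sub, Algebra.algebraMap_eq_smul_one, g.map_smul_of_tower, h1]
    norm_num
  have habs : ‖g b‖ ≤ ‖a‖ := by
    calc ‖g b‖ ≤ ‖g‖ * ‖b‖ := g.le_opNorm b
      _ ≤ 1 * ‖a‖ := by gcongr
      _ = ‖a‖ := one_mul _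
  have hre : |‖a‖ - (g a).re| ≤ ‖a‖ := by
    have : ‖g b‖ = |‖a‖ - (g a).re| := by
      rw [hgb]
      rw [show (‖a‖ : ℂ) - g a = ((‖a‖ - (g a).re : ℝ) : ℂ) by
        simp [Complex.ext_iff, him]]
      exact (Complex.norm_real _).trans (Real.norm_eq_abs _)
    linarith [habs, this.symm.le]
  rw [Complex.le_def]
  constructor
  · simp only [Complex.zero_re]
    have := (abs_le.mp hre).2
    linarith
  · simp [him]

lemma exists_state_apply_ne_zero [Nontrivial A] {δ : A} (hδs : IsSelfAdjoint δ) (hδ : δ ≠ 0) :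
    ∃ g : A →L[ℂ] ℂ, g 1 = 1 ∧ (∀ x, 0 ≤ g (star x * x)) ∧ g δ ≠ 0 := by
  set B := elemental ℂ δ with hB
  set δB : B := ⟨δ, elemental.self_mem ℂ δ⟩ with hδB
  have hδBne : δB ≠ 0 := by
    simp only [hδB, ne_eq, Subtype.ext_iff]
    exact hδ
  haveI : Nontrivial B := nontrivial_of_ne δB 0 hδBne
  haveI : IsStarNormal δ := hδs.isStarNormal
  have hδBsa : IsSelfAdjoint δB := by
    rw [IsSelfAdjoint, Subtype.ext_iff]
    exact hδs.star_eq
  obtain hr | hr := CStarAlgebra.norm_or_neg_norm_mem_spectrum (a := δB) hδBsa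
  all_goals {
    first
    | (have hz : ((‖δB‖ : ℝ) : ℂ) ∈ spectrum ℂ δB := by
        exact_mod_cast spectrum.algebraMap_mem ℂ hr
       have hzne : ((‖δB‖ : ℝ) : ℂ) ≠ 0 := by
        simp only [ne_eq, Complex.ofReal_eq_zero, norm_eq_zero]
        exact hδBne)
    | (have hz : ((-‖δB‖ : ℝ) : ℂ) ∈ spectrum ℂ δB := by
        exact_mod_cast spectrum.algebraMap_mem ℂ hr
       have hzne : ((-‖δB‖ : ℝ) : ℂ) ≠ 0 := by
        simp only [ne_eq, Complex.ofReal_eq_zero, neg_eq_zero, norm_eq_zero]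
        exact hδBne)
    obtain ⟨χ, hχ⟩ := WeakDual.CharacterSpace.mem_spectrum_iff_exists.mp hz
    have hmem : ∀ x : A, x ∈ Subalgebra.toSubmodule (elemental ℂ δ).toSubalgebra → x ∈ B := by
      intro x hx
      exact hx
    let e : (Subalgebra.toSubmodule (elemental ℂ δ).toSubalgebra : Submodule ℂ A) →ₗ[ℂ] B :=
      { toFun := fun x => ⟨x.1, hmem x.1 x.2⟩
        map_add' := fun _ _ => rfl
        map_smul' := fun _ _ => rfl }
    let l : (Subalgebra.toSubmodule (elemental ℂ δ).toSubalgebra : Submodule ℂ A) →ₗ[ℂ] ℂ :=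
      { toFun := fun x => χ (e x)
        map_add' := fun x y => by
          show χ (e (x + y)) = χ (e x) + χ (e y)
          rw [map_add, map_add]
        map_smul' := fun c x => by
          show χ (e (c • x)) = (RingHom.id ℂ) c • χ (e x)
          rw [map_smul, map_smul]
          rfl }
    have hbound : ∀ x, ‖l x‖ ≤ 1 * ‖x‖ := by
      intro x
      rw [one_mul]
      exact AlgHom.norm_apply_le_self χ (e x)
    have hlapp : ∀ x, l x = χ (e x) := fun _ => rfl
    let f₀ := l.mkContinuous 1 hbound
    obtain ⟨g, hext, hnorm⟩ := exists_extension_norm_eq _ f₀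
    have hgnorm : ‖g‖ ≤ 1 := by
      rw [hnorm]
      exact l.mkContinuous_norm_le zero_le_one hbound
    have hg1 : g 1 = 1 := by
      have h1m : (1 : A) ∈ Subalgebra.toSubmodule (elemental ℂ δ).toSubalgebra :=
        Subalgebra.one_mem _
      have := hext ⟨1, h1m⟩
      rw [this]
      show l ⟨1, h1m⟩ = 1
      rw [hlapp]
      have he : e ⟨1, h1m⟩ = (1 : B) := rfl
      rw [he, map_one]
    have hgδ : g δ = χ δB := by
      have hm : δ ∈ Subalgebra.toSubmodule (elemental ℂ δ).toSubalgebra :=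
        elemental.self_mem ℂ δ
      have := hext ⟨δ, hm⟩
      rw [this]
      show l ⟨δ, hm⟩ = χ δB
      rw [hlapp]
      rfl
    refine ⟨g, hg1, norm_one_unital_pos g hgnorm hg1, ?_⟩
    rw [hgδ, hχ]
    exact hzne }

lemma exists_nonnormal (hnc : ∃ a b : A, a * b ≠ b * a) :
    ∃ c : A, star c * c ≠ c * star c := by
  by_contra h
  push_neg at h
  obtain ⟨a, b, hab⟩ := hnc
  have key : ∀ p q : A, IsSelfAdjoint p → IsSelfAdjoint q → p * q = q * p := by
    intro p q hp hq
    have hc := h (p + Complex.I • q)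
    have hstar : star (p + Complex.I • q) = p - Complex.I • q := by
      rw [star_add, star_smul, hp.star_eq, hq.star_eq, Complex.star_def, Complex.conj_I,
        neg_smul, sub_eq_add_neg]
    rw [hstar] at hc
    have hexp : (p - Complex.I • q) * (p + Complex.I • q)
        = p * p + q * q + Complex.I • (p * q) - Complex.I • (q * p) := by
      simp only [sub_mul, mul_add, add_mul, mul_smul_comm, smul_mul_assoc, smul_smul,
        Complex.I_mul_I, neg_smul, one_smul, smul_sub, smul_add]
      abel
    have hexp' : (p + Complex.I • q) * (p - Complex.I • q)
        = p * p + q * q + Complex.I • (q * p) - Complex.I • (p * q) := by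
      simp only [sub_mul, mul_sub, mul_add, add_mul, mul_smul_comm, smul_mul_assoc, smul_smul,
        Complex.I_mul_I, neg_smul, one_smul, smul_sub, smul_add]
      abel
    rw [hexp, hexp'] at hc
    have h2 : (2 : ℂ) • (Complex.I • (p * q) - Complex.I • (q * p)) = 0 := by
      calc (2 : ℂ) • (Complex.I • (p * q) - Complex.I • (q * p))
          = (p * p + q * q + Complex.I • (p * q) - Complex.I • (q * p))
            - (p * p + q * q + Complex.I • (q * p) - Complex.I • (p * q)) := by
            rw [two_smul]; abel
        _ = 0 := by rw [hc]; exact sub_self _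
    rw [smul_eq_zero] at h2
    rcases h2 with h2 | h2
    · norm_num at h2
    · rw [sub_eq_zero] at h2
      exact smul_right_injective A Complex.I_ne_zero h2
  have mk_sa : ∀ x : A, IsSelfAdjoint (x + star x) ∧
      IsSelfAdjoint ((-Complex.I) • (x - star x)) ∧
      x = (2 : ℂ)⁻¹ • ((x + star x) + Complex.I • ((-Complex.I) • (x - star x))) := by
    intro x
    refine ⟨?_, ?_, ?_⟩
    · rw [IsSelfAdjoint, star_add, star_star, add_comm]
    · rw [IsSelfAdjoint, star_smul, star_sub, star_star, Complex.star_def, map_neg,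
        Complex.conj_I, neg_neg]
      rw [show (star x - x) = -(x - star x) by abel, smul_neg, ← neg_smul]
    · rw [smul_smul, show Complex.I * -Complex.I = 1 by simp [Complex.I_mul_I], one_smul,
        show x + star x + (x - star x) = (2 : ℂ) • x by rw [two_smul]; abel, smul_smul]
      norm_num
  obtain ⟨hra, hia, ha⟩ := mk_sa a
  obtain ⟨hrb, hib, hb⟩ := mk_sa b
  set ra := a + star a
  set ia := (-Complex.I) • (a - star a)
  set rb := b + star b
  set ib := (-Complex.I) • (b - star b)
  have expand : ∀ u v w z : A, u * w = w * u → u * z = z * u → v * w = w * v → v * z = z * v →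
      (u + Complex.I • v) * (w + Complex.I • z) = (w + Complex.I • z) * (u + Complex.I • v) := by
    intro u v w z h1 h2 h3 h4
    simp only [add_mul, mul_add, smul_add, mul_smul_comm, smul_mul_assoc, smul_smul,
      Complex.I_mul_I, neg_smul, one_smul]
    rw [h1, h2, h3, h4]
    abel
  have hcomm := expand ra ia rb ib (key _ _ hra hrb) (key _ _ hra hib) (key _ _ hia hrb)
    (key _ _ hia hib)
  apply hab
  rw [ha, hb, smul_mul_assoc, mul_smul_comm, hcomm, smul_mul_assoc, mul_smul_comm]

end CStar

end AuxLemmas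


set_option maxHeartbeats 2000000 in
/-- If `A` is a noncommutative unital C*-algebra, then there is an entangled state `φ` on
`M₂(A)` whose `M₂(ℂ)`-marginal is the normalized trace. -/
theorem exists_entangled_state_with_trace_marginal
    {A : Type*} [CStarAlgebra A] (hnc : ∃ a b : A, a * b ≠ b * a) :
    ∃ φ ∈ stateSpace (Matrix (Fin 2) (Fin 2) A),
      ¬ IsSeparableState φ ∧
      ∀ m : Matrix (Fin 2) (Fin 2) ℂ,
        φ (m.map (algebraMap ℂ A)) = (m 0 0 + m 1 1) / 2 := by
  haveI : Nontrivial A := by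
    obtain ⟨a, b, hab⟩ := hnc
    exact ⟨a * b, b * a, hab⟩
  obtain ⟨c₀, hc₀⟩ := exists_nonnormal hnc
  have hδs : IsSelfAdjoint (star c₀ * c₀ - c₀ * star c₀) := by
    rw [IsSelfAdjoint, star_sub, star_mul, star_mul, star_star]
  obtain ⟨g, hg1, hgpos, hgδ⟩ := exists_state_apply_ne_zero hδs (sub_ne_zero.mpr hc₀)
  have hgstar : ∀ a : A, g (star a) = starRingEnd ℂ (g a) := fun a =>
    pos_star_apply (g : A →ₗ[ℂ] ℂ) hgpos a
  have him : ∀ x : A, (g (star x * x)).im = 0 := fun x => ((Complex.le_def.mp (hgpos x)).2).symm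
  have hre : ∀ x : A, 0 ≤ (g (star x * x)).re := fun x => (Complex.le_def.mp (hgpos x)).1
  have him' : ∀ x : A, (g (x * star x)).im = 0 := by
    intro x; have := him (star x); rwa [star_star] at this
  have hre' : ∀ x : A, 0 ≤ (g (x * star x)).re := by
    intro x; have := hre (star x); rwa [star_star] at this
  -- find `c` whose commutator defect is positive under `g`
  obtain ⟨c, hc⟩ : ∃ c : A, 0 < (g (star c * c - c * star c)).re := by
    have h0 : (g (star c₀ * c₀ - c₀ * star c₀)).re ≠ 0 := by
      intro h
      apply hgδ
      have hi : (g (star c₀ * c₀ - c₀ * star c₀)).im = 0 := by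
        rw [map_sub]
        simp [Complex.sub_im, him c₀, him' c₀]
      exact Complex.ext (by simpa using h) (by simpa using hi)
    rcases h0.lt_or_gt with h | h
    · refine ⟨star c₀, ?_⟩
      have e : star (star c₀) * star c₀ - star c₀ * star (star c₀)
          = -(star c₀ * c₀ - c₀ * star c₀) := by rw [star_star]; abel
      rw [e, map_neg, Complex.neg_re]
      linarith
    · exact ⟨c₀, h⟩
  -- normalize to get `b` with `g b = 0`, `g (b* b) = 1`, `Re g (b b*) < 1`
  set w := g c with hw
  set b₀ := c - w • 1 with hb₀def
  have hgb₀ : g b₀ = 0 := by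
    rw [hb₀def, map_sub, map_smul, hg1, smul_eq_mul, mul_one, sub_self]
  have hδb : star b₀ * b₀ - b₀ * star b₀ = star c * c - c * star c := by
    rw [hb₀def]
    simp only [star_sub, star_smul, star_one, RCLike.star_def, sub_mul, mul_sub, smul_sub,
      smul_mul_assoc, mul_smul_comm, smul_smul, one_mul, mul_one]
    rw [mul_comm (starRingEnd ℂ w) w]
    abel
  set d := (g (star c * c - c * star c)).re with hd
  have ht0 : 0 < (g (star b₀ * b₀)).re := by
    have e : g (star b₀ * b₀) - g (b₀ * star b₀) = g (star c * c - c * star c) := by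
      rw [← map_sub, hδb]
    have e2 : (g (star b₀ * b₀)).re - (g (b₀ * star b₀)).re = d := by
      rw [hd, ← e]; simp [Complex.sub_re]
    have := hre' b₀
    linarith [hc]
  set t := (g (star b₀ * b₀)).re with htdef
  set b := (((Real.sqrt t)⁻¹ : ℝ) : ℂ) • b₀ with hbdef
  have hsq : ((Real.sqrt t)⁻¹ : ℝ) * ((Real.sqrt t)⁻¹ : ℝ) = t⁻¹ := by
    rw [← mul_inv, Real.mul_self_sqrt ht0.le]
  have hstarb : star b = (((Real.sqrt t)⁻¹ : ℝ) : ℂ) • star b₀ := by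
    rw [hbdef, star_smul]
    norm_num
  have hbb₀ : star b * b = ((t⁻¹ : ℝ) : ℂ) • (star b₀ * b₀) := by
    rw [hbdef, hstarb, smul_mul_assoc, mul_smul_comm, smul_smul]
    norm_cast
    rw [hsq]
  have hbb₀' : b * star b = ((t⁻¹ : ℝ) : ℂ) • (b₀ * star b₀) := by
    rw [hbdef, hstarb, smul_mul_assoc, mul_smul_comm, smul_smul]
    norm_cast
    rw [hsq]
  have hgb : g b = 0 := by rw [hbdef, map_smul, hgb₀, smul_zero]
  have hgsb : g (star b) = 0 := by rw [hgstar, hgb, map_zero]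
  have hgbb : g (star b * b) = 1 := by
    rw [hbb₀, map_smul, smul_eq_mul]
    have hgt : g (star b₀ * b₀) = ((t : ℝ) : ℂ) := Complex.ext rfl (him b₀)
    rw [hgt]
    norm_cast
    exact inv_mul_cancel₀ ht0.ne'
  have hgbb'im : (g (b * star b)).im = 0 := by
    rw [hbb₀', map_smul, smul_eq_mul]
    simp [Complex.mul_im, him' b₀]
  have hgbblt : (g (b * star b)).re < 1 := by
    have e : g (star b * b) - g (b * star b)
        = ((t⁻¹ : ℝ) : ℂ) * g (star c * c - c * star c) := by
      rw [hbb₀, hbb₀', map_smul, map_smul, smul_eq_mul, smul_eq_mul, ← mul_sub, ← map_sub, hδb]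
    have e2 : 1 - (g (b * star b)).re = t⁻¹ * d := by
      have h3 := congrArg Complex.re e
      rwa [Complex.sub_re, hgbb, Complex.one_re, Complex.mul_re, Complex.ofReal_re,
        Complex.ofReal_im, zero_mul, sub_zero, ← hd] at h3
    have hpos : 0 < t⁻¹ * d := mul_pos (inv_pos.mpr ht0) hc
    linarith
  -- the entangled state Φ
  set E : Matrix (Fin 2) (Fin 2) A → A := fun x =>
    x 0 0 + x 0 1 * b + star b * x 1 0 + star b * x 1 1 * b with hE
  have hEcont : Continuous E := by
    have h00 : Continuous fun x : Matrix (Fin 2) (Fin 2) A => x 0 0 :=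
      (continuous_apply (0 : Fin 2)).comp (continuous_apply (0 : Fin 2))
    have h01 : Continuous fun x : Matrix (Fin 2) (Fin 2) A => x 0 1 :=
      (continuous_apply (1 : Fin 2)).comp (continuous_apply (0 : Fin 2))
    have h10 : Continuous fun x : Matrix (Fin 2) (Fin 2) A => x 1 0 :=
      (continuous_apply (0 : Fin 2)).comp (continuous_apply (1 : Fin 2))
    have h11 : Continuous fun x : Matrix (Fin 2) (Fin 2) A => x 1 1 :=
      (continuous_apply (1 : Fin 2)).comp (continuous_apply (1 : Fin 2))
    exact ((h00.add (h01.mul continuous_const)).add (continuous_const.mul h10)).add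
      ((continuous_const.mul h11).mul continuous_const)
  set Φ : WeakDual ℂ (Matrix (Fin 2) (Fin 2) A) :=
    { toFun := fun x => ((2⁻¹ : ℝ) : ℂ) * g (E x)
      map_add' := by
        intro x y
        have hadd : E (x + y) = E x + E y := by
          simp only [hE, Matrix.add_apply, add_mul, mul_add]
          abel
        show ((2⁻¹ : ℝ) : ℂ) * g (E (x + y))
            = ((2⁻¹ : ℝ) : ℂ) * g (E x) + ((2⁻¹ : ℝ) : ℂ) * g (E y)
        rw [hadd, map_add]
        ring
      map_smul' := by
        intro z x
        have hsmul : E (z • x) = z • E x := by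
          simp only [hE, Matrix.smul_apply, smul_add, smul_mul_assoc, mul_smul_comm]
        show ((2⁻¹ : ℝ) : ℂ) * g (E (z • x)) = z • (((2⁻¹ : ℝ) : ℂ) * g (E x))
        rw [hsmul, map_smul, smul_eq_mul, smul_eq_mul]
        ring
      cont := continuous_const.mul (g.continuous.comp hEcont) } with hΦ
  have hΦapp : ∀ x : Matrix (Fin 2) (Fin 2) A, Φ x = ((2⁻¹ : ℝ) : ℂ) * g (E x) := fun _ => rfl
  refine ⟨Φ, ⟨?_, ?_⟩, ?_, ?_⟩
  · -- Φ 1 = 1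
    rw [hΦapp]
    have h1 : E (1 : Matrix (Fin 2) (Fin 2) A) = 1 + star b * b := by
      simp only [hE]
      rw [Matrix.one_apply_eq, Matrix.one_apply_eq, Matrix.one_apply_ne (by decide),
        Matrix.one_apply_ne (by decide)]
      simp
    rw [h1, map_add, hg1, hgbb]
    norm_num
  · -- positivity of Φ
    intro x
    rw [hΦapp]
    have hEx : E (star x * x) = star (x 0 0 + x 0 1 * b) * (x 0 0 + x 0 1 * b)
        + star (x 1 0 + x 1 1 * b) * (x 1 0 + x 1 1 * b) := by
      simp only [hE, Matrix.mul_apply, Matrix.star_apply, Fin.sum_univ_two, star_add, star_mul,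
        add_mul, mul_add, mul_assoc]
      abel
    rw [hEx, map_add]
    refine ofReal_mul_nonneg' (by norm_num) ?_
    have p1 := hgpos (x 0 0 + x 0 1 * b)
    have p2 := hgpos (x 1 0 + x 1 1 * b)
    rw [Complex.le_def] at p1 p2 ⊢
    constructor
    · simp only [Complex.add_re, Complex.zero_re] at p1 p2 ⊢
      linarith only [p1.1, p2.1]
    · simp only [Complex.add_im, Complex.zero_im] at p1 p2 ⊢
      linarith only [p1.2, p2.2]
  · -- entanglement
    intro hsep
    set c₁ : Matrix (Fin 2) (Fin 2) A :=
      Matrix.of ![![b * star b, -(star b)], ![-b, (1 : A)]] with hc₁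
    have hEc₁ : E c₁ = b * star b - star b * b := by
      simp only [hE, hc₁, Matrix.of_apply, Matrix.cons_val', Matrix.cons_val_zero,
        Matrix.cons_val_one, Matrix.head_cons, Matrix.empty_val', Matrix.cons_val_fin_one,
        Matrix.head_fin_const]
      rw [neg_mul, mul_neg, mul_one]
      abel
    have hneg : ¬ (0 ≤ Φ c₁) := by
      rw [hΦapp, hEc₁]
      intro hle
      have h1 := (Complex.le_def.mp hle).1
      rw [Complex.zero_re, Complex.mul_re, Complex.ofReal_re, Complex.ofReal_im, zero_mul,
        sub_zero, map_sub, Complex.sub_re] at h1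
      rw [hgbb, Complex.one_re] at h1
      have h2 := (mul_nonneg_iff_of_pos_left (show (0:ℝ) < 2⁻¹ by norm_num)).mp h1
      linarith only [h2, hgbblt]
    apply hneg
    have hsub : closure (convexHull ℝ
        {χ : WeakDual ℂ (Matrix (Fin 2) (Fin 2) A) |
          ∃ μ ∈ stateSpace (Matrix (Fin 2) (Fin 2) ℂ), ∃ ψ ∈ stateSpace A, χ = productState μ ψ})
        ⊆ {χ : WeakDual ℂ (Matrix (Fin 2) (Fin 2) A) | 0 ≤ χ c₁} := by
      apply closure_minimal
      · apply convexHull_min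
        · rintro χ ⟨μ, hμ, ψ, hψ, rfl⟩
          obtain ⟨hμ1, hμpos⟩ := hμ
          obtain ⟨hψ1, hψpos⟩ := hψ
          show 0 ≤ productState μ ψ c₁
          have happ : productState μ ψ c₁ = μ (c₁.map (ψ : A →L[ℂ] ℂ)) := rfl
          have hψstar : ∀ u : A, ψ (star u) = starRingEnd ℂ (ψ u) := fun u =>
            pos_star_apply ((ψ : A →L[ℂ] ℂ) : A →ₗ[ℂ] ℂ) hψpos u
          set q := ψ b with hq
          have hp0 : 0 ≤ ψ (b * star b) := by
            have := hψpos (star b); rwa [star_star] at this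
          have hpim : (ψ (b * star b)).im = 0 := ((Complex.le_def.mp hp0).2).symm
          have hpre : 0 ≤ (ψ (b * star b)).re := (Complex.le_def.mp hp0).1
          have hcs : Complex.normSq q ≤ (ψ (b * star b)).re := by
            have h5 : Complex.normSq (ψ (star b)) ≤ (ψ (b * star b)).re := by
              have h6 := pos_cs_one ((ψ : A →L[ℂ] ℂ) : A →ₗ[ℂ] ℂ) hψ1 hψpos (star b)
              rw [star_star] at h6
              exact h6
            rw [hψstar b, Complex.normSq_conj] at h5
            exact h5
          set s' := Real.sqrt ((ψ (b * star b)).re - Complex.normSq q) with hs'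
          have hs'sq : s' * s' = (ψ (b * star b)).re - Complex.normSq q :=
            Real.mul_self_sqrt (by linarith only [hcs])
          set y : Matrix (Fin 2) (Fin 2) ℂ := Matrix.of ![![(s' : ℂ), 0], ![-q, 1]] with hy
          have hyy : star y * y = c₁.map (ψ : A →L[ℂ] ℂ) := by
            ext i j
            fin_cases i <;> fin_cases j <;>
              simp [hy, hc₁, Matrix.mul_apply, Matrix.star_apply, Matrix.map_apply,
                Fin.sum_univ_two, hψstar, map_neg, hψ1]
            rw [← Complex.ofReal_mul, hs'sq, mul_comm ((starRingEnd ℂ) q) q, Complex.mul_conj, ← Complex.ofReal_add,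
              sub_add_cancel]
            exact Complex.ext (by simp) (by simp [hpim])
            all_goals rfl
          rw [happ, ← hyy]
          exact hμpos y
        · intro χ₁ h1 χ₂ h2 a b' ha hb' hab
          show 0 ≤ (a • χ₁ + b' • χ₂) c₁
          have happ : (a • χ₁ + b' • χ₂) c₁ = a • χ₁ c₁ + b' • χ₂ c₁ := rfl
          rw [happ, Complex.real_smul, Complex.real_smul]
          have g1 := ofReal_mul_nonneg' ha h1
          have g2 := ofReal_mul_nonneg' hb' h2
          rw [Complex.le_def] at g1 g2 ⊢
          constructor
          · simp only [Complex.add_re, Complex.zero_re] at g1 g2 ⊢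
            linarith only [g1.1, g2.1]
          · simp only [Complex.add_im, Complex.zero_im] at g1 g2 ⊢
            linarith only [g1.2, g2.2]
      · have hset : {χ : WeakDual ℂ (Matrix (Fin 2) (Fin 2) A) | 0 ≤ χ c₁}
            = (fun χ : WeakDual ℂ (Matrix (Fin 2) (Fin 2) A) => χ c₁) ⁻¹'
              ({z : ℂ | 0 ≤ z.re} ∩ {z : ℂ | z.im = 0}) := by
          ext z
          simp only [Set.mem_setOf_eq, Set.mem_preimage, Set.mem_inter_iff, Complex.le_def,
            Complex.zero_re, Complex.zero_im]
          tauto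
        rw [hset]
        exact ((isClosed_le continuous_const Complex.continuous_re).inter
          (isClosed_eq Complex.continuous_im continuous_const)).preimage
          (WeakDual.eval_continuous c₁)
    exact hsub hsep
  · -- the marginal is the normalized trace
    intro m
    rw [hΦapp]
    have hEm : E (m.map (algebraMap ℂ A)) = m 0 0 • (1 : A) + m 0 1 • b + m 1 0 • star b
        + m 1 1 • (star b * b) := by
      simp only [hE, Matrix.map_apply, Algebra.algebraMap_eq_smul_one, smul_mul_assoc,
        mul_smul_comm, one_mul, mul_one]
    rw [hEm]
    simp only [map_add, map_smul, hg1, hgb, hgsb, hgbb, smul_eq_mul, mul_one, mul_zero,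
      add_zero, zero_add]
    push_cast
    ring

end
end

section
/- Let A be a unital C*-algebra, k ≥ 1, and let φ be a state on M_k(A) whose M_k-marginal μ (the state m ↦ φ(m.map (algebraMap ℂ A)) on M_k(ℂ)) is pure. Then φ is the product of its marginals: writing ψ for the A-marginal of φ (the state a ↦ φ(a • 1) on A, where a • 1 is the diagonal matrix with a in every diagonal entry), one has φ(x) = μ(x.map ψ) for every x ∈ M_k(A). In particular, φ is separable. -/
open scoped ComplexOrder

noncomputable section

/-- The inclusion of scalar matrices `M_k(ℂ) → M_k(B)`, applying `algebraMap ℂ B` entrywise. -/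
def scalarMatrixCLM (k : ℕ) (B : Type*) [Ring B] [Algebra ℂ B] [TopologicalSpace B]
    [ContinuousSMul ℂ B] :
    Matrix (Fin k) (Fin k) ℂ →L[ℂ] Matrix (Fin k) (Fin k) B where
  toLinearMap := LinearMap.mapMatrix (Algebra.linearMap ℂ B)
  cont := by
    show Continuous fun M : Matrix (Fin k) (Fin k) ℂ => M.map (algebraMap ℂ B)
    refine continuous_pi fun i => continuous_pi fun j => ?_
    simp only [Matrix.map_apply, Algebra.algebraMap_eq_smul_one]
    exact (continuous_id.matrix_elem i j).smul continuous_const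

/-- The `M_k(ℂ)`-marginal of a state on `M_k(B)`: `m ↦ φ (m.map (algebraMap ℂ B))`. -/
def scalarMarginal {k : ℕ} {B : Type*} [Ring B] [Algebra ℂ B] [TopologicalSpace B]
    [ContinuousSMul ℂ B] (φ : WeakDual ℂ (Matrix (Fin k) (Fin k) B)) :
    WeakDual ℂ (Matrix (Fin k) (Fin k) ℂ) :=
  (φ : Matrix (Fin k) (Fin k) B →L[ℂ] ℂ).comp (scalarMatrixCLM k B)

/-- The diagonal embedding `B → M_k(B)`, `a ↦ a • 1`, as a continuous linear map. -/
def diagonalCLM (k : ℕ) (B : Type*) [Ring B] [Algebra ℂ B] [TopologicalSpace B]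
    [ContinuousMul B] : B →L[ℂ] Matrix (Fin k) (Fin k) B where
  toFun a := a • (1 : Matrix (Fin k) (Fin k) B)
  map_add' a b := add_smul a b _
  map_smul' c a := smul_assoc c a _
  cont := by
    refine continuous_pi fun i => continuous_pi fun j => ?_
    exact continuous_id.smul continuous_const

/-- The `B`-marginal of a state on `M_k(B)`: `a ↦ φ (a • 1)`. -/
def algebraMarginal {k : ℕ} {B : Type*} [Ring B] [Algebra ℂ B] [TopologicalSpace B]
    [ContinuousMul B] (φ : WeakDual ℂ (Matrix (Fin k) (Fin k) B)) : WeakDual ℂ B :=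
  (φ : Matrix (Fin k) (Fin k) B →L[ℂ] ℂ).comp (diagonalCLM k B)

section Auxiliary

open scoped ComplexOrder

private lemma forall_nonneg_aux {w s : ℂ} (h : ∀ t : ℝ, 0 ≤ w + (t : ℂ) * s) : s = 0 := by
  have him : s.im = 0 := by
    have h0 := (Complex.nonneg_iff.mp (h 0)).2
    have h1 := (Complex.nonneg_iff.mp (h 1)).2
    simp only [Complex.add_im, Complex.mul_im, Complex.ofReal_re, Complex.ofReal_im,
      Complex.ofReal_zero, Complex.ofReal_one, Complex.zero_re, Complex.zero_im,
      Complex.one_re, Complex.one_im] at h0 h1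
    linarith
  have hre : s.re = 0 := by
    by_contra hs
    have ht := (Complex.nonneg_iff.mp (h ((-w.re - 1) / s.re))).1
    simp only [Complex.add_re, Complex.mul_re, Complex.ofReal_re, Complex.ofReal_im] at ht
    rw [him] at ht
    rw [div_mul_cancel₀ _ hs] at ht
    nlinarith
  exact Complex.ext hre him

private lemma state_zero_of_apply_one {B : Type*} [Ring B] [StarRing B] [Module ℂ B]
    [SMulCommClass ℂ B B] [IsScalarTower ℂ B B] [StarModule ℂ B] [TopologicalSpace B]
    (g : WeakDual ℂ B) (hpos : ∀ x : B, 0 ≤ g (star x * x)) (h1 : g 1 = 0) (x : B) :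
    g x = 0 := by
  have key : ∀ lam : ℂ, 0 ≤ g (star x * x) + lam * g (star x) + star lam * g x := by
    intro lam
    have hexp : star (x + lam • (1 : B)) * (x + lam • 1) =
        star x * x + lam • star x + star lam • x + (star lam * lam) • (1 : B) := by
      rw [star_add, star_smul, star_one]
      rw [add_mul, mul_add, mul_add]
      rw [mul_smul_comm lam (star x) (1 : B), mul_one]
      rw [smul_mul_assoc, one_mul]
      rw [smul_mul_assoc, mul_smul_comm, mul_one, smul_smul]
      abel
    have hp := hpos (x + lam • 1)
    rw [hexp] at hp
    simpa [map_add, map_smul, smul_eq_mul, h1] using hp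
  have hIm : g (star x) = g x := by
    have hz : Complex.I * (g (star x) - g x) = 0 := by
      apply forall_nonneg_aux (w := g (star x * x))
      intro t
      have hk := key ((t : ℂ) * Complex.I)
      have hst : star ((t : ℂ) * Complex.I) = (t : ℂ) * (-Complex.I) := by
        simp [Complex.star_def, Complex.conj_ofReal]
      rw [hst] at hk
      convert hk using 1
      ring
    have := mul_eq_zero.mp hz
    rcases this with h | h
    · exact absurd h Complex.I_ne_zero
    · exact sub_eq_zero.mp h
  have hs : g (star x) + g x = 0 := by
    apply forall_nonneg_aux (w := g (star x * x))
    intro t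
    have hk := key (t : ℂ)
    have hst : star ((t : ℂ)) = (t : ℂ) := by
      simp [Complex.star_def, Complex.conj_ofReal]
    rw [hst] at hk
    convert hk using 1
    ring
  rw [hIm] at hs
  have h2 : (2 : ℂ) * g x = 0 := by rw [two_mul]; exact hs
  exact (mul_eq_zero.mp h2).resolve_left two_ne_zero

private lemma extreme_absorb {B : Type*} [Ring B] [StarRing B] [Module ℂ B]
    [SMulCommClass ℂ B B] [IsScalarTower ℂ B B] [StarModule ℂ B] [TopologicalSpace B]
    {e : WeakDual ℂ B} (he : e ∈ Set.extremePoints ℝ (stateSpace B))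
    (f : WeakDual ℂ B) (hf : ∀ x : B, 0 ≤ f (star x * x))
    (hef : ∀ x : B, 0 ≤ e (star x * x) - f (star x * x)) (m : B) :
    f m = f 1 * e m := by
  obtain ⟨heS, hext⟩ := he
  obtain ⟨he1, hepos⟩ := heS
  have hf1 : 0 ≤ f 1 := by simpa using hf 1
  have hf1' : 0 ≤ 1 - f 1 := by
    have := hef 1
    simpa [he1] using this
  set t : ℝ := (f 1).re with htdef
  have hf1t : f 1 = (t : ℂ) := by
    have him := (Complex.nonneg_iff.mp hf1).2
    exact Complex.ext rfl (by simpa using him.symm)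
  have ht0 : 0 ≤ t := (Complex.nonneg_iff.mp hf1).1
  have ht1 : t ≤ 1 := by
    have := (Complex.nonneg_iff.mp hf1').1
    simp only [Complex.sub_re, Complex.one_re] at this
    linarith
  rcases eq_or_lt_of_le ht0 with h0 | h0
  · have hz : f 1 = 0 := by rw [hf1t, ← h0]; simp
    rw [hz, zero_mul]
    exact state_zero_of_apply_one f hf hz m
  rcases eq_or_lt_of_le ht1 with h1 | h1
  · -- t = 1, so e - f is a positive functional vanishing at 1
    have hfe : f 1 = 1 := by rw [hf1t, h1]; norm_num
    have hgpos : ∀ x : B, 0 ≤ (e - f) (star x * x) := fun x => hef x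
    have hg1 : (e - f) 1 = 0 := by
      have h' : (e - f) 1 = e 1 - f 1 := rfl
      rw [h', he1, hfe, sub_self]
    have hz := state_zero_of_apply_one (e - f) hgpos hg1 m
    have hz' : e m - f m = 0 := hz
    rw [hfe, one_mul]
    exact (sub_eq_zero.mp hz').symm
  · -- 0 < t < 1
    have htne : (t : ℝ) ≠ 0 := ne_of_gt h0
    have h1tne : (1 - t : ℝ) ≠ 0 := by linarith
    set x : WeakDual ℂ B := (t⁻¹ : ℝ) • f with hxdef
    set y : WeakDual ℂ B := ((1 - t)⁻¹ : ℝ) • (e - f) with hydef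
    have hxapp : ∀ v : B, x v = (t⁻¹ : ℝ) • f v := fun v => rfl
    have hyapp : ∀ v : B, y v = ((1 - t)⁻¹ : ℝ) • (e v - f v) := fun v => rfl
    have hx : x ∈ stateSpace B := by
      constructor
      · rw [hxapp, hf1t, Complex.real_smul]
        push_cast
        exact inv_mul_cancel₀ (by exact_mod_cast htne)
      · intro v
        rw [hxapp, Complex.real_smul]
        exact mul_nonneg (Complex.zero_le_real.mpr (inv_nonneg.mpr ht0)) (hf v)
    have hy : y ∈ stateSpace B := by
      constructor
      · rw [hyapp, he1, hf1t]
        rw [show (1 : ℂ) - (t : ℂ) = ((1 - t : ℝ) : ℂ) by push_cast; ring]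
        rw [Complex.real_smul]
        push_cast
        exact inv_mul_cancel₀ (by exact_mod_cast h1tne)
      · intro v
        rw [hyapp, Complex.real_smul]
        exact mul_nonneg (Complex.zero_le_real.mpr (inv_nonneg.mpr (by linarith))) (hef v)
    have hseg : e ∈ openSegment ℝ x y := by
      refine ⟨t, 1 - t, h0, by linarith, by ring, ?_⟩
      refine DFunLike.ext _ _ fun v => ?_
      show (t : ℝ) • x v + (1 - t : ℝ) • y v = e v
      rw [hxapp, hyapp, smul_smul, smul_smul, mul_inv_cancel₀ htne,
        mul_inv_cancel₀ h1tne, one_smul, one_smul]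
      abel
    have hxe := hext hx hy hseg
    have : f m = t • e m := by
      have h' : x m = e m := by rw [hxe]
      rw [hxapp] at h'
      calc f m = t • ((t⁻¹ : ℝ) • f m) := by
            rw [smul_smul, mul_inv_cancel₀ htne, one_smul]
        _ = t • e m := by rw [h']
    rw [this, hf1t, Complex.real_smul]

end Auxiliary

section MatrixAux

open scoped ComplexOrder

variable {A : Type*} [CStarAlgebra A] {k : ℕ}

private lemma map_alg_mul (m n : Matrix (Fin k) (Fin k) ℂ) :
    (m * n).map (algebraMap ℂ A) = m.map (algebraMap ℂ A) * n.map (algebraMap ℂ A) :=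
  Matrix.map_mul

private lemma map_alg_star (m : Matrix (Fin k) (Fin k) ℂ) :
    (star m).map (algebraMap ℂ A) = star (m.map (algebraMap ℂ A)) := by
  ext i j
  simp only [Matrix.map_apply, Matrix.star_apply]
  exact algebraMap_star_comm (m j i)

private lemma map_alg_one : ((1 : Matrix (Fin k) (Fin k) ℂ)).map (algebraMap ℂ A) = 1 :=
  Matrix.map_one _ (map_zero _) (map_one _)

private lemma star_diag (a : A) :
    star (a • (1 : Matrix (Fin k) (Fin k) A)) = star a • 1 := by
  ext i j
  by_cases h : j = i
  · simp [Matrix.star_apply, Matrix.smul_apply, Matrix.one_apply, h]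
  · simp [Matrix.star_apply, Matrix.smul_apply, Matrix.one_apply, h, Ne.symm h]

private lemma diag_mul_diag (a b : A) :
    (a • (1 : Matrix (Fin k) (Fin k) A)) * (b • 1) = (a * b) • 1 := by
  rw [Matrix.smul_mul, one_mul, smul_smul]

private lemma sm_diag_comm (m : Matrix (Fin k) (Fin k) ℂ) (a : A) :
    m.map (algebraMap ℂ A) * (a • 1) = (a • 1) * m.map (algebraMap ℂ A) := by
  ext i j
  simp only [Matrix.mul_apply, Matrix.map_apply, Matrix.smul_apply, Matrix.one_apply,
    smul_eq_mul, mul_ite, ite_mul, mul_one, one_mul, mul_zero, zero_mul]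
  rw [Finset.sum_ite_eq' Finset.univ j, Finset.sum_ite_eq Finset.univ i]
  simp [Algebra.commutes]

private lemma star_form (n : Matrix (Fin k) (Fin k) ℂ) (c : A) :
    star (n.map (algebraMap ℂ A) * (c • 1)) * (n.map (algebraMap ℂ A) * (c • 1)) =
      (star n * n).map (algebraMap ℂ A) * ((star c * c) • 1) := by
  rw [star_mul, star_diag, ← map_alg_star]
  rw [show (star c • (1 : Matrix (Fin k) (Fin k) A)) * ((star n).map (algebraMap ℂ A)) =
      ((star n).map (algebraMap ℂ A)) * (star c • 1) from (sm_diag_comm _ _).symm]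
  rw [mul_assoc, ← mul_assoc (star c • (1 : Matrix (Fin k) (Fin k) A))]
  rw [show (star c • (1 : Matrix (Fin k) (Fin k) A)) * (n.map (algebraMap ℂ A)) =
      (n.map (algebraMap ℂ A)) * (star c • 1) from (sm_diag_comm _ _).symm]
  rw [mul_assoc, ← mul_assoc, ← map_alg_mul, diag_mul_diag]

private lemma stdBasis_factor (i j : Fin k) (a : A) :
    (Matrix.single i j (1 : ℂ)).map (algebraMap ℂ A) * (a • 1) =
      Matrix.single i j a := by
  ext p q
  simp only [Matrix.mul_apply, Matrix.map_apply, Matrix.smul_apply, Matrix.one_apply,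
    Matrix.single, Matrix.of_apply, smul_eq_mul, mul_ite, ite_mul, mul_one, one_mul,
    mul_zero, zero_mul, apply_ite (algebraMap ℂ A), map_one, map_zero]
  rw [Finset.sum_ite_eq' Finset.univ q]
  by_cases hp : p = i <;> by_cases hq : q = j <;> simp [hp, hq]

/-- Right multiplication by a fixed matrix, as a continuous linear map. -/
private def mulRightCLM (C : Matrix (Fin k) (Fin k) A) :
    Matrix (Fin k) (Fin k) A →L[ℂ] Matrix (Fin k) (Fin k) A where
  toFun M := M * C
  map_add' M N := Matrix.add_mul M N C
  map_smul' c M := Matrix.smul_mul c M C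
  cont := by
    refine continuous_pi fun i => continuous_pi fun j => ?_
    simp only [Matrix.mul_apply]
    exact continuous_finset_sum _ fun r _ =>
      (continuous_id.matrix_elem i r).mul continuous_const

end MatrixAux

section CoreAux

open scoped ComplexOrder

variable {A : Type*} [CStarAlgebra A] {k : ℕ}

private lemma scalarMarginal_apply (φ : WeakDual ℂ (Matrix (Fin k) (Fin k) A))
    (m : Matrix (Fin k) (Fin k) ℂ) :
    scalarMarginal φ m = φ (m.map (algebraMap ℂ A)) := rfl

private lemma algebraMarginal_apply (φ : WeakDual ℂ (Matrix (Fin k) (Fin k) A)) (a : A) :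
    algebraMarginal φ a = φ (a • 1) := rfl

private lemma scalarMarginal_mem (φ : WeakDual ℂ (Matrix (Fin k) (Fin k) A))
    (hφ : φ ∈ stateSpace (Matrix (Fin k) (Fin k) A)) :
    scalarMarginal φ ∈ stateSpace (Matrix (Fin k) (Fin k) ℂ) := by
  constructor
  · rw [scalarMarginal_apply, map_alg_one]
    exact hφ.1
  · intro n
    rw [scalarMarginal_apply, map_alg_mul, map_alg_star]
    exact hφ.2 _

private lemma algebraMarginal_mem (φ : WeakDual ℂ (Matrix (Fin k) (Fin k) A))
    (hφ : φ ∈ stateSpace (Matrix (Fin k) (Fin k) A)) :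
    algebraMarginal φ ∈ stateSpace A := by
  constructor
  · rw [algebraMarginal_apply, one_smul]
    exact hφ.1
  · intro a
    rw [algebraMarginal_apply, ← diag_mul_diag, ← star_diag]
    exact hφ.2 _

private lemma alg_real_nonneg [PartialOrder A] [StarOrderedRing A] {r : ℝ} (hr : 0 ≤ r) :
    0 ≤ algebraMap ℝ A r := by
  have h := star_mul_self_nonneg (algebraMap ℝ A (Real.sqrt r))
  rwa [← algebraMap_star_comm, star_trivial, ← map_mul, Real.mul_self_sqrt hr] at h

private lemma star_mul_self_le_one' [PartialOrder A] [StarOrderedRing A] {c : A}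
    (hc : ‖c‖ ≤ 1) : star c * c ≤ 1 := by
  have h1 : star c * c ≤ algebraMap ℝ A ‖star c * c‖ :=
    IsSelfAdjoint.le_algebraMap_norm_self (IsSelfAdjoint.star_mul_self c)
  have hn : ‖star c * c‖ ≤ 1 := by
    rw [CStarRing.norm_star_mul_self]
    nlinarith [norm_nonneg c]
  have h2 : algebraMap ℝ A ‖star c * c‖ ≤ 1 := by
    have h3 := alg_real_nonneg (A := A) (sub_nonneg.mpr hn)
    rw [map_sub, map_one] at h3
    exact sub_nonneg.mp h3
  exact h1.trans h2

private lemma phi_factor (φ : WeakDual ℂ (Matrix (Fin k) (Fin k) A))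
    (hφ : φ ∈ stateSpace (Matrix (Fin k) (Fin k) A))
    (hpure : scalarMarginal φ ∈
      Set.extremePoints ℝ (stateSpace (Matrix (Fin k) (Fin k) ℂ)))
    (a : A) (m : Matrix (Fin k) (Fin k) ℂ) :
    φ (m.map (algebraMap ℂ A) * (a • 1)) = algebraMarginal φ a * scalarMarginal φ m := by
  letI : PartialOrder A := CStarAlgebra.spectralOrder A
  haveI : StarOrderedRing A := CStarAlgebra.spectralOrderedRing A
  set P : A → Prop := fun b =>
    φ (m.map (algebraMap ℂ A) * (b • 1)) = algebraMarginal φ b * scalarMarginal φ m with hP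
  suffices h : P a from h
  have hsmul : ∀ (z : ℂ) (b : A), P b → P (z • b) := by
    intro z b hb
    simp only [hP] at hb ⊢
    rw [smul_assoc, Matrix.mul_smul, map_smul, map_smul, smul_eq_mul, smul_eq_mul, hb]
    ring
  have hadd : ∀ b c : A, P b → P c → P (b + c) := by
    intro b c hb hc
    simp only [hP] at hb hc ⊢
    rw [add_smul, mul_add, map_add, map_add, hb, hc]
    ring
  have hsub : ∀ b c : A, P b → P c → P (b - c) := by
    intro b c hb hc
    simp only [hP] at hb hc ⊢
    rw [sub_smul, mul_sub, map_sub, map_sub, hb, hc]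
    ring
  have hcore : ∀ (c : A) (n : Matrix (Fin k) (Fin k) ℂ),
      0 ≤ φ ((star n * n).map (algebraMap ℂ A) * ((star c * c) • 1)) := by
    intro c n
    rw [← star_form]
    exact hφ.2 _
  have hsmall : ∀ c : A, ‖c‖ ≤ 1 → P (star c * c) := by
    intro c hc
    set g : WeakDual ℂ (Matrix (Fin k) (Fin k) ℂ) :=
      ((φ : Matrix (Fin k) (Fin k) A →L[ℂ] ℂ).comp
        ((mulRightCLM ((star c * c) • 1)).comp (scalarMatrixCLM k A))) with hgdef
    have hgapp : ∀ n : Matrix (Fin k) (Fin k) ℂ,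
        g n = φ (n.map (algebraMap ℂ A) * ((star c * c) • 1)) := fun n => rfl
    have hgpos : ∀ n, 0 ≤ g (star n * n) := by
      intro n
      rw [hgapp]
      exact hcore c n
    have hd : ∃ d : A, star d * d = 1 - star c * c := by
      have h0 : 0 ≤ 1 - star c * c := sub_nonneg.mpr (star_mul_self_le_one' hc)
      refine ⟨CFC.sqrt (1 - star c * c), ?_⟩
      rw [(CFC.sqrt_nonneg (a := 1 - star c * c)).isSelfAdjoint.star_eq,
        CFC.sqrt_mul_sqrt_self _ h0]
    have hsub0 : ∀ n, 0 ≤ scalarMarginal φ (star n * n) - g (star n * n) := by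
      intro n
      obtain ⟨d, hdd⟩ := hd
      have hrw : scalarMarginal φ (star n * n) - g (star n * n)
          = φ ((star n * n).map (algebraMap ℂ A) * ((star d * d) • 1)) := by
        rw [hdd, scalarMarginal_apply, hgapp, sub_smul, one_smul, mul_sub, mul_one, map_sub]
      rw [hrw]
      exact hcore d n
    have habs := extreme_absorb hpure g hgpos hsub0 m
    have hg1 : g 1 = algebraMarginal φ (star c * c) := by
      rw [hgapp, map_alg_one, one_mul]
      rfl
    show φ (m.map (algebraMap ℂ A) * ((star c * c) • 1))
        = algebraMarginal φ (star c * c) * scalarMarginal φ m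
    rw [← hgapp, habs, hg1]
  have hsc : ∀ c : A, P (star c * c) := by
    intro c
    by_cases hc0 : c = 0
    · subst hc0
      show φ (m.map (algebraMap ℂ A) * (((star (0 : A)) * 0) • 1))
          = algebraMarginal φ (star (0 : A) * 0) * scalarMarginal φ m
      simp
    · have hn : ‖c‖ ≠ 0 := norm_ne_zero_iff.mpr hc0
      set z : ℂ := ((‖c‖⁻¹ : ℝ) : ℂ) with hz
      have hzne : z ≠ 0 := by
        rw [hz]
        exact_mod_cast inv_ne_zero hn
      have h1 : ‖z • c‖ ≤ 1 := by
        rw [norm_smul, hz, Complex.norm_real, Real.norm_eq_abs,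
          abs_of_nonneg (inv_nonneg.mpr (norm_nonneg c)), inv_mul_cancel₀ hn]
      have hp := hsmall (z • c) h1
      have hform : star (z • c) * (z • c) = (star z * z) • (star c * c) := by
        rw [star_smul, smul_mul_assoc, mul_smul_comm, smul_smul]
      rw [hform] at hp
      have hzz : star z * z ≠ 0 := mul_ne_zero (by simpa using hzne) hzne
      have hres := hsmul ((star z * z)⁻¹) _ hp
      rwa [smul_smul, inv_mul_cancel₀ hzz, one_smul] at hres
  have hpos : ∀ b : A, 0 ≤ b → P b := by
    intro b hb
    have h := hsc (CFC.sqrt b)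
    rwa [(CFC.sqrt_nonneg (a := b)).isSelfAdjoint.star_eq, CFC.sqrt_mul_sqrt_self b hb] at h
  have hsa : ∀ b : A, IsSelfAdjoint b → P b := by
    intro b hb
    have h := hsub _ _ (hpos _ (CFC.posPart_nonneg b)) (hpos _ (CFC.negPart_nonneg b))
    rwa [CFC.posPart_sub_negPart b hb] at h
  have h := hadd _ _ (hsa _ (realPart a).2) (hsmul Complex.I _ (hsa _ (imaginaryPart a).2))
  rwa [realPart_add_I_smul_imaginaryPart a] at h

end CoreAux

/-- If the `M_k(ℂ)`-marginal of a state `φ` on `M_k(A)` is pure, then `φ` is the product of its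
two marginals: `φ x = μ (x.map ψ)` where `μ` is the `M_k(ℂ)`-marginal and `ψ` is the
`A`-marginal `a ↦ φ (a • 1)`.  In particular `φ` is separable. -/
theorem eq_product_of_pure_marginal
    {A : Type*} [CStarAlgebra A] (k : ℕ) (hk : 1 ≤ k)
    (φ : WeakDual ℂ (Matrix (Fin k) (Fin k) A))
    (hφ : φ ∈ stateSpace (Matrix (Fin k) (Fin k) A))
    (hpure : scalarMarginal φ ∈
      Set.extremePoints ℝ (stateSpace (Matrix (Fin k) (Fin k) ℂ))) :
    (∀ x : Matrix (Fin k) (Fin k) A,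
        φ x = scalarMarginal φ (x.map (algebraMarginal φ))) ∧
      IsSeparableState φ := by
  have hμ := scalarMarginal_mem φ hφ
  have hψ := algebraMarginal_mem φ hφ
  have main : ∀ x : Matrix (Fin k) (Fin k) A,
      φ x = scalarMarginal φ (x.map (algebraMarginal φ)) := by
    intro x
    have hxd : x = ∑ i : Fin k, ∑ j : Fin k, Matrix.single i j (x i j) :=
      Matrix.matrix_eq_sum_single x
    have hL : φ x = ∑ i : Fin k, ∑ j : Fin k,
        algebraMarginal φ (x i j) * scalarMarginal φ (Matrix.single i j (1 : ℂ)) := by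
      conv_lhs => rw [hxd]
      rw [map_sum]
      refine Finset.sum_congr rfl fun i _ => ?_
      rw [map_sum]
      refine Finset.sum_congr rfl fun j _ => ?_
      rw [← stdBasis_factor i j (x i j)]
      exact phi_factor φ hφ hpure _ _
    have hR : scalarMarginal φ (x.map (algebraMarginal φ)) = ∑ i : Fin k, ∑ j : Fin k,
        algebraMarginal φ (x i j) * scalarMarginal φ (Matrix.single i j (1 : ℂ)) := by
      have hxm : x.map (algebraMarginal φ) = ∑ i : Fin k, ∑ j : Fin k,
          algebraMarginal φ (x i j) • Matrix.single i j (1 : ℂ) := by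
        conv_lhs => rw [Matrix.matrix_eq_sum_single (x.map (algebraMarginal φ))]
        refine Finset.sum_congr rfl fun i _ => Finset.sum_congr rfl fun j _ => ?_
        rw [Matrix.smul_single, smul_eq_mul, mul_one]
        rfl
      rw [hxm, map_sum]
      refine Finset.sum_congr rfl fun i _ => ?_
      rw [map_sum]
      refine Finset.sum_congr rfl fun j _ => ?_
      rw [map_smul, smul_eq_mul]
    rw [hL, hR]
  refine ⟨main, ?_⟩
  have hprod : φ = productState (scalarMarginal φ) (algebraMarginal φ) := by
    apply DFunLike.ext
    intro x
    exact main x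
  rw [IsSeparableState, hprod]
  exact subset_closure (subset_convexHull ℝ _ ⟨_, hμ, _, hψ, rfl⟩)

end
end

section
/- Let A be a unital C*-algebra and k ≥ 1. The set of product states on M_k(A), i.e. the set of states of the form x ↦ μ(x.map ψ) for some state μ on M_k(ℂ) and some state ψ on A, is closed in the state space of M_k(A) with respect to the weak-* topology. -/
open scoped ComplexOrder

noncomputable section

namespace ProductStatesAux

variable {k : ℕ} {A : Type*} [CStarAlgebra A]

/-- The canonical unital embedding `M_k(ℂ) → M_k(A)` as a continuous linear map. -/
def iotaCLM (k : ℕ) (A : Type*) [CStarAlgebra A] :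
    Matrix (Fin k) (Fin k) ℂ →L[ℂ] Matrix (Fin k) (Fin k) A :=
  matrixMapCLM (ContinuousLinearMap.toSpanSingleton ℂ (1 : A))

lemma iotaCLM_apply (m : Matrix (Fin k) (Fin k) ℂ) :
    iotaCLM k A m = m.map (fun c => c • (1 : A)) := rfl

lemma iotaCLM_eq (m : Matrix (Fin k) (Fin k) ℂ) :
    iotaCLM k A m = (algebraMap ℂ A).mapMatrix m := by
  ext i j
  simp [iotaCLM_apply, Matrix.map_apply, Algebra.algebraMap_eq_smul_one]

lemma iota_one : iotaCLM k A 1 = 1 := by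
  rw [iotaCLM_eq]; exact map_one _

lemma iota_star_mul (m : Matrix (Fin k) (Fin k) ℂ) :
    iotaCLM k A (star m * m) = star (iotaCLM k A m) * iotaCLM k A m := by
  simp only [iotaCLM_eq, map_mul]
  congr 1
  show ((algebraMap ℂ A).mapMatrix (star m)) = star ((algebraMap ℂ A).mapMatrix m)
  show (m.conjTranspose).map (algebraMap ℂ A) = (m.map (algebraMap ℂ A)).conjTranspose
  exact Matrix.conjTranspose_map _ fun c => (algebraMap_star_comm c)

/-- The diagonal embedding `A → M_k(A)` as a continuous linear map. -/
def deltaCLM (k : ℕ) (A : Type*) [CStarAlgebra A] : A →L[ℂ] Matrix (Fin k) (Fin k) A where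
  toFun a := Matrix.diagonal fun _ => a
  map_add' a b := by
    ext i j
    by_cases h : i = j <;> simp [Matrix.diagonal_apply, h]
  map_smul' c a := by
    ext i j
    by_cases h : i = j <;> simp [Matrix.diagonal_apply, h]
  cont := by
    refine continuous_pi fun i => continuous_pi fun j => ?_
    by_cases h : i = j
    · simp [Matrix.diagonal_apply, h, continuous_id']
    · simpa [Matrix.diagonal_apply, h] using (continuous_const : Continuous fun _ : A => (0 : A))

lemma deltaCLM_apply (a : A) : deltaCLM k A a = Matrix.diagonal fun _ => a := by rfl

lemma delta_one : deltaCLM k A 1 = 1 := by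
  rw [deltaCLM_apply]; exact Matrix.diagonal_one

lemma delta_star_mul (a : A) :
    deltaCLM k A (star a * a) = star (deltaCLM k A a) * deltaCLM k A a := by
  simp only [deltaCLM_apply]
  show Matrix.diagonal _ =
    (Matrix.diagonal fun _ : Fin k => a).conjTranspose * Matrix.diagonal fun _ => a
  rw [Matrix.diagonal_conjTranspose, Matrix.diagonal_mul_diagonal]
  rfl

/-- Any continuous linear functional on `M_k(ℂ)` is determined by its values on the
standard basis matrices. -/
lemma dual_eq_sum (μ : WeakDual ℂ (Matrix (Fin k) (Fin k) ℂ)) (M : Matrix (Fin k) (Fin k) ℂ) :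
    μ M = ∑ i, ∑ j, M i j * μ (Matrix.single i j 1) := by
  conv_lhs => rw [Matrix.matrix_eq_sum_single M]
  rw [map_sum]
  refine Finset.sum_congr rfl fun i _ => ?_
  rw [map_sum]
  refine Finset.sum_congr rfl fun j _ => ?_
  have : Matrix.single i j (M i j) = M i j • Matrix.single i j 1 := by
    rw [Matrix.smul_single, smul_eq_mul, mul_one]
  rw [this, map_smul, smul_eq_mul]

lemma map_iota (ψ : WeakDual ℂ A) (hψ : ψ 1 = 1) (m : Matrix (Fin k) (Fin k) ℂ) :
    (iotaCLM k A m).map ψ = m := by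
  ext i j
  simp only [iotaCLM_apply, Matrix.map_apply]
  rw [map_smul, smul_eq_mul, hψ, mul_one]

lemma map_delta (ψ : WeakDual ℂ A) (a : A) :
    (deltaCLM k A a).map ψ = Matrix.diagonal fun _ => ψ a := by
  ext i j
  by_cases h : i = j <;> simp [deltaCLM_apply, Matrix.map_apply, Matrix.diagonal_apply, h]

lemma productState_apply {B : Type*} [Ring B] [Module ℂ B] [TopologicalSpace B]
    (μ : WeakDual ℂ (Matrix (Fin k) (Fin k) ℂ)) (ψ : WeakDual ℂ B)
    (x : Matrix (Fin k) (Fin k) B) :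
    productState μ ψ x = μ (x.map ψ) := rfl

/-- The map sending a functional `φ` on `M_k(A)` to the product of its two marginals. -/
def PS (k : ℕ) (A : Type*) [CStarAlgebra A] (φ : WeakDual ℂ (Matrix (Fin k) (Fin k) A)) :
    WeakDual ℂ (Matrix (Fin k) (Fin k) A) :=
  productState ((φ : Matrix (Fin k) (Fin k) A →L[ℂ] ℂ).comp (iotaCLM k A))
    ((φ : Matrix (Fin k) (Fin k) A →L[ℂ] ℂ).comp (deltaCLM k A))

lemma PS_apply (φ : WeakDual ℂ (Matrix (Fin k) (Fin k) A)) (x : Matrix (Fin k) (Fin k) A) :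
    PS k A φ x = ∑ i, ∑ j, φ (deltaCLM k A (x i j)) *
      φ (iotaCLM k A (Matrix.single i j 1)) := by
  refine (productState_apply _ _ x).trans ?_
  refine (dual_eq_sum _ _).trans ?_
  refine Finset.sum_congr rfl fun i _ => Finset.sum_congr rfl fun j _ => ?_
  rfl

lemma continuous_PS : Continuous (PS k A) := by
  refine WeakDual.continuous_of_continuous_eval fun x => ?_
  simp only [PS_apply]
  refine continuous_finset_sum _ fun i _ => continuous_finset_sum _ fun j _ => ?_
  exact (WeakDual.eval_continuous _).mul (WeakDual.eval_continuous _)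

lemma PS_of_product (μ : WeakDual ℂ (Matrix (Fin k) (Fin k) ℂ))
    (hμ : μ ∈ stateSpace (Matrix (Fin k) (Fin k) ℂ)) (ψ : WeakDual ℂ A)
    (hψ : ψ ∈ stateSpace A) : PS k A (productState μ ψ) = productState μ ψ := by
  have hmu1 : ((productState μ ψ : Matrix (Fin k) (Fin k) A →L[ℂ] ℂ).comp (iotaCLM k A)) = μ := by
    ext m
    show productState μ ψ (iotaCLM k A m) = μ m
    rw [productState_apply, map_iota ψ hψ.1]
  have hpsi1 : ((productState μ ψ : Matrix (Fin k) (Fin k) A →L[ℂ] ℂ).comp (deltaCLM k A)) = ψ := by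
    ext a
    show productState μ ψ (deltaCLM k A a) = ψ a
    rw [productState_apply, map_delta]
    have : (Matrix.diagonal fun _ : Fin k => ψ a) = ψ a • (1 : Matrix (Fin k) (Fin k) ℂ) := by
      ext i j
      by_cases h : i = j <;>
        simp [Matrix.diagonal_apply, Matrix.one_apply, h]
    rw [this, map_smul, smul_eq_mul, hμ.1, mul_one]
  rw [PS, hmu1, hpsi1]

end ProductStatesAux

/-- The set of product states on `M_k(A)` is weak-* closed in the state space of `M_k(A)`. -/
theorem productStates_isClosed
    {A : Type*} [CStarAlgebra A] (k : ℕ) (hk : 1 ≤ k) :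
    IsClosed {φ : ↥(stateSpace (Matrix (Fin k) (Fin k) A)) |
      ∃ μ ∈ stateSpace (Matrix (Fin k) (Fin k) ℂ), ∃ ψ ∈ stateSpace A,
        (φ : WeakDual ℂ (Matrix (Fin k) (Fin k) A)) = productState μ ψ} := by
  open ProductStatesAux in
  have hset : {φ : ↥(stateSpace (Matrix (Fin k) (Fin k) A)) |
      ∃ μ ∈ stateSpace (Matrix (Fin k) (Fin k) ℂ), ∃ ψ ∈ stateSpace A,
        (φ : WeakDual ℂ (Matrix (Fin k) (Fin k) A)) = productState μ ψ} =
      Subtype.val ⁻¹' {φ : WeakDual ℂ (Matrix (Fin k) (Fin k) A) | PS k A φ = φ} := by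
    ext ⟨φ, hφ⟩
    simp only [Set.mem_setOf_eq, Set.mem_preimage]
    constructor
    · rintro ⟨μ, hμ, ψ, hψ, h⟩
      rw [h]
      exact PS_of_product μ hμ ψ hψ
    · intro h
      refine ⟨(φ : Matrix (Fin k) (Fin k) A →L[ℂ] ℂ).comp (iotaCLM k A), ⟨?_, ?_⟩,
        (φ : Matrix (Fin k) (Fin k) A →L[ℂ] ℂ).comp (deltaCLM k A), ⟨?_, ?_⟩, h.symm⟩
      · show φ (iotaCLM k A 1) = 1
        rw [iota_one]; exact hφ.1
      · intro m
        show 0 ≤ φ (iotaCLM k A (star m * m))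
        rw [iota_star_mul]; exact hφ.2 _
      · show φ (deltaCLM k A 1) = 1
        rw [delta_one]; exact hφ.1
      · intro a
        show 0 ≤ φ (deltaCLM k A (star a * a))
        rw [delta_star_mul]; exact hφ.2 _
  rw [hset]
  exact (isClosed_eq continuous_PS continuous_id).preimage continuous_subtype_val

end
end

section
/- Let A be a unital C*-algebra and m ≥ 1, and let φ be a state on M₂(M_m(A)), viewed as realizing the triple tensor product M₂(ℂ) ⊗ M_m(ℂ) ⊗ A (outer 2×2 index, inner m×m index, entries in A). Suppose the restriction of φ to the scalar matrices, i.e. the state on M₂(M_m(ℂ)) given by M ↦ φ(M with every innermost complex entry mapped into A via algebraMap ℂ A), is entangled with respect to the decomposition M₂ versus M_m (it does not lie in the weak-* closure of the convex hull of the states x ↦ μ(x.map ν) with μ a state on M₂(ℂ) and ν a state on M_m(ℂ)). Then φ is entangled with respect to the decomposition M₂ versus M_m(A): φ does not lie in the weak-* closure of the convex hull of the states x ↦ μ(x.map ψ) with μ a state on M₂(ℂ) and ψ a state on M_m(A). -/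
open scoped ComplexOrder

noncomputable section

/-- If `φ` is a state on `M₂(M_m(A))` (realizing `M₂(ℂ) ⊗ M_m(ℂ) ⊗ A`) whose restriction to the
scalar matrices `M₂(M_m(ℂ))` is entangled with respect to the decomposition `M₂` versus `M_m`,
then `φ` is entangled with respect to the decomposition `M₂` versus `M_m(A)`. -/
theorem entangled_of_scalar_restriction_entangled
    {A : Type*} [CStarAlgebra A] (m : ℕ) (hm : 1 ≤ m)
    (φ : WeakDual ℂ (Matrix (Fin 2) (Fin 2) (Matrix (Fin m) (Fin m) A)))
    (hφ : φ ∈ stateSpace (Matrix (Fin 2) (Fin 2) (Matrix (Fin m) (Fin m) A)))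
    (hent : ¬ IsSeparableState
      (((φ : Matrix (Fin 2) (Fin 2) (Matrix (Fin m) (Fin m) A) →L[ℂ] ℂ).comp
          (matrixMapCLM (scalarMatrixCLM m A)) :
        WeakDual ℂ (Matrix (Fin 2) (Fin 2) (Matrix (Fin m) (Fin m) ℂ))))) :
    ¬ IsSeparableState φ := by
  intro hsep
  apply hent
  classical
  set T : Matrix (Fin 2) (Fin 2) (Matrix (Fin m) (Fin m) ℂ) →L[ℂ]
      Matrix (Fin 2) (Fin 2) (Matrix (Fin m) (Fin m) A) :=
    matrixMapCLM (scalarMatrixCLM m A) with hT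
  let Rlin : WeakDual ℂ (Matrix (Fin 2) (Fin 2) (Matrix (Fin m) (Fin m) A)) →ₗ[ℝ]
      WeakDual ℂ (Matrix (Fin 2) (Fin 2) (Matrix (Fin m) (Fin m) ℂ)) :=
    { toFun := fun χ => (χ : Matrix (Fin 2) (Fin 2) (Matrix (Fin m) (Fin m) A) →L[ℂ] ℂ).comp T
      map_add' := fun x y => ContinuousLinearMap.ext fun z => rfl
      map_smul' := fun c x => ContinuousLinearMap.ext fun z => rfl }
  have hRc : Continuous Rlin :=
    WeakDual.continuous_of_continuous_eval fun z => WeakDual.eval_continuous (T z)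
  -- image of the set of product states lands in the set of scalar product states
  have himg : Rlin ''
      {χ : WeakDual ℂ (Matrix (Fin 2) (Fin 2) (Matrix (Fin m) (Fin m) A)) |
        ∃ μ ∈ stateSpace (Matrix (Fin 2) (Fin 2) ℂ),
          ∃ ψ ∈ stateSpace (Matrix (Fin m) (Fin m) A), χ = productState μ ψ} ⊆
      {χ : WeakDual ℂ (Matrix (Fin 2) (Fin 2) (Matrix (Fin m) (Fin m) ℂ)) |
        ∃ μ ∈ stateSpace (Matrix (Fin 2) (Fin 2) ℂ),
          ∃ ν ∈ stateSpace (Matrix (Fin m) (Fin m) ℂ), χ = productState μ ν} := by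
    rintro - ⟨χ, ⟨μ, hμ, ψ, hψ, rfl⟩, rfl⟩
    refine ⟨μ, hμ,
      ((ψ : Matrix (Fin m) (Fin m) A →L[ℂ] ℂ).comp (scalarMatrixCLM m A) :
        WeakDual ℂ (Matrix (Fin m) (Fin m) ℂ)), ⟨?_, ?_⟩, ?_⟩
    · show ψ ((1 : Matrix (Fin m) (Fin m) ℂ).map (algebraMap ℂ A)) = 1
      rw [Matrix.map_one _ (map_zero _) (map_one _)]
      exact hψ.1
    · intro x
      show 0 ≤ ψ ((star x * x).map (algebraMap ℂ A))
      have h1 : (star x * x).map (algebraMap ℂ A) =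
          star (x.map (algebraMap ℂ A)) * x.map (algebraMap ℂ A) := by
        rw [Matrix.map_mul]
        congr 1
        exact (Matrix.conjTranspose_map _ fun a => algebraMap_star_comm a)
      rw [h1]
      exact hψ.2 _
    · exact ContinuousLinearMap.ext fun x => rfl
  -- conclude
  have : Rlin φ ∈ closure (convexHull ℝ
      {χ : WeakDual ℂ (Matrix (Fin 2) (Fin 2) (Matrix (Fin m) (Fin m) ℂ)) |
        ∃ μ ∈ stateSpace (Matrix (Fin 2) (Fin 2) ℂ),
          ∃ ν ∈ stateSpace (Matrix (Fin m) (Fin m) ℂ), χ = productState μ ν}) := by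
    have h2 := image_closure_subset_closure_image (f := Rlin) hRc (Set.mem_image_of_mem _ hsep)
    rw [Rlin.image_convexHull] at h2
    exact closure_mono (convexHull_mono himg) h2
  exact this


end
end
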